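/- For τ ∈ ℝ and finitely supported v, w : ℤ^d → ℂ, let R_τ(v, w) denote the relation: for every k ∈ ℤ^d, w_k = e^{−iτ|k|²} v_k − i(τ/16) e^{−iτ|k|²} Σ_{−k₁+k₂+k₃=k} φ₁(2iτ|k₁|²) · (conj(v_{k₁}) + e^{−iτ|k₁|²} conj(w_{k₁})) (v_{k₂} + e^{iτ|k₂|²} w_{k₂}) (v_{k₃} + e^{iτ|k₃|²} w_{k₃}) − i(τ/16) Σ_{−k₁+k₂+k₃=k} φ₁(−2iτ|k₁|²) · (e^{iτ|k₁|²} conj(v_{k₁}) + conj(w_{k₁})) (e^{−iτ|k₂|²} v_{k₂} + w_{k₂}) (e^{−iτ|k₃|²} v_{k₃} + w_{k₃}). Then R is symmetric: for all τ ∈ ℝ and all finitely supported v, w, R_τ(v, w) holds if and only if R_{−τ}(w, v) holds. -/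
import Mathlib


/-- `φ₁(z) = (exp z - 1)/z` for `z ≠ 0`, `φ₁(0) = 1`. -/
noncomputable def phi1 (z : ℂ) : ℂ := if z = 0 then 1 else (Complex.exp z - 1) / z

/-- `|k|² = k·k` for a frequency `k ∈ ℤ^d`, as a complex number. -/
noncomputable def nsq {d : ℕ} (k : Fin d → ℤ) : ℂ := ∑ i, ((k i : ℂ)) ^ 2

/-- One step of the first-order resonance-based midpoint scheme for the cubic
nonlinear Schrödinger equation on `𝕋^d`, in Fourier coordinates: `nlsMid1R τ v w`
holds iff for every `k ∈ ℤ^d`,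
`w_k = e^{-iτ|k|²} v_k
  - i(τ/16) e^{-iτ|k|²} Σ_{-k₁+k₂+k₃=k} φ₁(2iτ|k₁|²)
      (conj v_{k₁} + e^{-iτ|k₁|²} conj w_{k₁})(v_{k₂} + e^{iτ|k₂|²} w_{k₂})(v_{k₃} + e^{iτ|k₃|²} w_{k₃})
  - i(τ/16) Σ_{-k₁+k₂+k₃=k} φ₁(-2iτ|k₁|²)
      (e^{iτ|k₁|²} conj v_{k₁} + conj w_{k₁})(e^{-iτ|k₂|²} v_{k₂} + w_{k₂})(e^{-iτ|k₃|²} v_{k₃} + w_{k₃})`,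
where the convolution constraint `-k₁+k₂+k₃ = k` has been solved as `k₃ = k + k₁ - k₂`. -/
noncomputable def nlsMid1R {d : ℕ} (τ : ℝ) (v w : (Fin d → ℤ) →₀ ℂ) : Prop :=
  ∀ k : Fin d → ℤ,
    w k = Complex.exp (-(Complex.I * (τ : ℂ) * nsq k)) * v k
      - Complex.I * ((τ : ℂ) / 16) * Complex.exp (-(Complex.I * (τ : ℂ) * nsq k)) *
          (∑ᶠ k₁ : Fin d → ℤ, ∑ᶠ k₂ : Fin d → ℤ,
            phi1 (2 * Complex.I * (τ : ℂ) * nsq k₁) *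
              (((starRingEnd ℂ) (v k₁) +
                  Complex.exp (-(Complex.I * (τ : ℂ) * nsq k₁)) * (starRingEnd ℂ) (w k₁)) *
                (v k₂ + Complex.exp (Complex.I * (τ : ℂ) * nsq k₂) * w k₂) *
                (v (k + k₁ - k₂) +
                  Complex.exp (Complex.I * (τ : ℂ) * nsq (k + k₁ - k₂)) * w (k + k₁ - k₂))))
      - Complex.I * ((τ : ℂ) / 16) *
          (∑ᶠ k₁ : Fin d → ℤ, ∑ᶠ k₂ : Fin d → ℤ,
            phi1 (-(2 * Complex.I * (τ : ℂ) * nsq k₁)) *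
              ((Complex.exp (Complex.I * (τ : ℂ) * nsq k₁) * (starRingEnd ℂ) (v k₁) +
                  (starRingEnd ℂ) (w k₁)) *
                (Complex.exp (-(Complex.I * (τ : ℂ) * nsq k₂)) * v k₂ + w k₂) *
                (Complex.exp (-(Complex.I * (τ : ℂ) * nsq (k + k₁ - k₂))) * v (k + k₁ - k₂) +
                  w (k + k₁ - k₂))))

/-- The first convolution sum of the scheme, abbreviated. -/
noncomputable def SA {d : ℕ} (τ : ℝ) (v w : (Fin d → ℤ) →₀ ℂ) (k : Fin d → ℤ) : ℂ :=
  ∑ᶠ k₁ : Fin d → ℤ, ∑ᶠ k₂ : Fin d → ℤ,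
    phi1 (2 * Complex.I * (τ : ℂ) * nsq k₁) *
      (((starRingEnd ℂ) (v k₁) +
          Complex.exp (-(Complex.I * (τ : ℂ) * nsq k₁)) * (starRingEnd ℂ) (w k₁)) *
        (v k₂ + Complex.exp (Complex.I * (τ : ℂ) * nsq k₂) * w k₂) *
        (v (k + k₁ - k₂) +
          Complex.exp (Complex.I * (τ : ℂ) * nsq (k + k₁ - k₂)) * w (k + k₁ - k₂)))

/-- The second convolution sum of the scheme, abbreviated. -/
noncomputable def SB {d : ℕ} (τ : ℝ) (v w : (Fin d → ℤ) →₀ ℂ) (k : Fin d → ℤ) : ℂ :=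
  ∑ᶠ k₁ : Fin d → ℤ, ∑ᶠ k₂ : Fin d → ℤ,
    phi1 (-(2 * Complex.I * (τ : ℂ) * nsq k₁)) *
      ((Complex.exp (Complex.I * (τ : ℂ) * nsq k₁) * (starRingEnd ℂ) (v k₁) +
          (starRingEnd ℂ) (w k₁)) *
        (Complex.exp (-(Complex.I * (τ : ℂ) * nsq k₂)) * v k₂ + w k₂) *
        (Complex.exp (-(Complex.I * (τ : ℂ) * nsq (k + k₁ - k₂))) * v (k + k₁ - k₂) +
          w (k + k₁ - k₂)))

lemma SA_neg {d : ℕ} (τ : ℝ) (v w : (Fin d → ℤ) →₀ ℂ) (k : Fin d → ℤ) :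
    SA (-τ) w v k = SB τ v w k := by
  refine finsum_congr fun k₁ => finsum_congr fun k₂ => ?_
  push_cast
  ring_nf

lemma SB_neg {d : ℕ} (τ : ℝ) (v w : (Fin d → ℤ) →₀ ℂ) (k : Fin d → ℤ) :
    SB (-τ) w v k = SA τ v w k := by
  refine finsum_congr fun k₁ => finsum_congr fun k₂ => ?_
  push_cast
  ring_nf

lemma aux_iff (e e' a b S T t : ℂ) (hE : e * e' = 1) :
    (b = e' * a - Complex.I * (t / 16) * e' * S - Complex.I * (t / 16) * T) ↔
    (a = e * b + Complex.I * (t / 16) * e * T + Complex.I * (t / 16) * S) := by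
  constructor <;> intro h
  · linear_combination (-e) * h + (Complex.I * (t / 16) * S - a) * hE
  · linear_combination (-e') * h + (-(b + Complex.I * (t / 16) * T)) * hE

lemma nlsMid1R_key {d : ℕ} (τ : ℝ) (v w : (Fin d → ℤ) →₀ ℂ) :
    (∀ k : Fin d → ℤ,
      w k = Complex.exp (-(Complex.I * (τ : ℂ) * nsq k)) * v k
        - Complex.I * ((τ : ℂ) / 16) * Complex.exp (-(Complex.I * (τ : ℂ) * nsq k)) * SA τ v w k
        - Complex.I * ((τ : ℂ) / 16) * SB τ v w k) ↔
    (∀ k : Fin d → ℤ,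
      v k = Complex.exp (-(Complex.I * ((-τ : ℝ) : ℂ) * nsq k)) * w k
        - Complex.I * (((-τ : ℝ) : ℂ) / 16) *
            Complex.exp (-(Complex.I * ((-τ : ℝ) : ℂ) * nsq k)) * SA (-τ) w v k
        - Complex.I * (((-τ : ℝ) : ℂ) / 16) * SB (-τ) w v k) := by
  apply forall_congr'
  intro k
  rw [SA_neg, SB_neg]
  have hE : Complex.exp (Complex.I * (τ : ℂ) * nsq k) *
      Complex.exp (-(Complex.I * (τ : ℂ) * nsq k)) = 1 := by
    rw [← Complex.exp_add, add_neg_cancel, Complex.exp_zero]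
  simp only [Complex.ofReal_neg, neg_div, mul_neg, neg_mul, neg_neg, sub_neg_eq_add]
  exact aux_iff _ _ _ _ _ _ _ hE

/-- The one-step relation of the first-order resonance-based midpoint NLS scheme is
symmetric: `R_τ(v, w)` holds iff `R_{-τ}(w, v)` holds. -/
theorem nlsMid1R_symmetric {d : ℕ} (τ : ℝ) (v w : (Fin d → ℤ) →₀ ℂ) :
    nlsMid1R τ v w ↔ nlsMid1R (-τ) w v := by
  exact nlsMid1R_key τ v w
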